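/- arXiv:1711.06750 — 2 statements merged into one kernel-verified Lean document; each statement's English description precedes it below -/
import Mathlib

section
/- Let A be a Banach algebra with a two-sided approximate identity bounded by K which has the strong property (B) with constant C. Let X be a Banach space and π : A → B(X) a continuous algebra homomorphism which is non-degenerate (the linear span of {π(a)x : a ∈ A, x ∈ X} is dense in X). Let π(A)′ = {S ∈ B(X) : Sπ(a) = π(a)S for all a ∈ A}. Suppose the set {δ_L : L ∈ B(X)} of inner derivations, where δ_L(a) = π(a)L − Lπ(a), is a closed subspace of the bounded operators from A to B(X) (equivalently, H¹(A, B(X)) is a Banach space), and let M > 0 satisfy dist(L, π(A)′) ≤ M‖δ_L‖ for all L ∈ B(X). Then for every T ∈ B(X): dist(T, π(A)′) ≤ M·C·K²·‖π‖²·sup_{‖x‖≤1} dist(Tx, {Sx : S ∈ π(A)′}). In particular π(A)′ is hyperreflexive with constant at most MCK²‖π‖². -/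
/-- A Banach algebra `A` has the strong property (B) with constant `r` if for every
Banach space `X`, every bounded bilinear map `φ : A × A → X` and every `α ≥ 0` such that
`‖φ(a,b)‖ ≤ α‖a‖‖b‖` whenever `ab = 0`, one has
`‖φ(ab,c) − φ(a,bc)‖ ≤ rα‖a‖‖b‖‖c‖` for all `a, b, c`. -/
def StrongPropertyB (A : Type*) [NonUnitalNormedRing A] [NormedSpace ℂ A]
    [IsScalarTower ℂ A A] [SMulCommClass ℂ A A] (r : ℝ) : Prop :=
  ∀ (X : Type) [NormedAddCommGroup X] [NormedSpace ℂ X] [CompleteSpace X]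
    (φ : A →L[ℂ] A →L[ℂ] X) (α : ℝ), 0 ≤ α →
    (∀ a b : A, a * b = 0 → ‖φ a b‖ ≤ α * ‖a‖ * ‖b‖) →
    ∀ a b c : A, ‖φ (a * b) c - φ a (b * c)‖ ≤ r * α * ‖a‖ * ‖b‖ * ‖c‖

noncomputable section

open Filter Topology

set_option maxHeartbeats 1000000 in
theorem stmt_10 (A : Type*) [NonUnitalNormedRing A] [NormedSpace ℂ A]
    [IsScalarTower ℂ A A] [SMulCommClass ℂ A A] [CompleteSpace A]
    -- `A` has a two-sided approximate identity bounded by `K`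
    (K : ℝ)
    (hK : ∃ (ι : Type) (lf : Filter ι), lf.NeBot ∧ ∃ e : ι → A,
      (∀ i, ‖e i‖ ≤ K) ∧ ∀ a : A,
        Tendsto (fun i => e i * a) lf (𝓝 a) ∧ Tendsto (fun i => a * e i) lf (𝓝 a))
    (C : ℝ) (hC : 0 < C) (hB : StrongPropertyB A C)
    (X : Type) [NormedAddCommGroup X] [NormedSpace ℂ X] [CompleteSpace X]
    -- a continuous representation of `A` on `X`
    (π : A →L[ℂ] X →L[ℂ] X)
    (hπmul : ∀ a b : A, π (a * b) = (π a).comp (π b))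
    -- non-degeneracy
    (hπnd : Dense (Submodule.span ℂ {y : X | ∃ (a : A) (x : X), π a x = y} : Set X))
    -- the map `L ↦ δ_L`, `δ_L(a) = π(a)L − Lπ(a)`, on inner derivations
    (Δ : (X →L[ℂ] X) → (A →L[ℂ] X →L[ℂ] X))
    (hΔ : ∀ (L : X →L[ℂ] X) (a : A), Δ L a = (π a).comp L - L.comp (π a))
    -- `H¹(A, B(X))` is a Banach space: the set of inner derivations is closed
    (hclosed : IsClosed (Set.range Δ))
    (M : ℝ) (hM : 0 < M)
    (hMdist : ∀ L : X →L[ℂ] X,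
      Metric.infDist L {S : X →L[ℂ] X | ∀ a : A, S.comp (π a) = (π a).comp S} ≤ M * ‖Δ L‖) :
    ∀ T : X →L[ℂ] X,
      Metric.infDist T {S : X →L[ℂ] X | ∀ a : A, S.comp (π a) = (π a).comp S} ≤
        M * C * K ^ 2 * ‖π‖ ^ 2 *
          sSup {d : ℝ | ∃ x : X, ‖x‖ ≤ 1 ∧
            d = Metric.infDist (T x)
              ((fun S : X →L[ℂ] X => S x) ''
                {S : X →L[ℂ] X | ∀ a : A, S.comp (π a) = (π a).comp S})} := by
  obtain ⟨ι, lf, hne, e, heK, he⟩ := hK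
  haveI : lf.NeBot := hne
  have hK0 : 0 ≤ K := le_trans (norm_nonneg _) (heK (Filter.nonempty_of_neBot lf).some)
  -- strong convergence of π(e i) to the identity
  have hπe : ∀ y : X, Tendsto (fun i => π (e i) y) lf (𝓝 y) := by
    have hspan : ∀ y ∈ Submodule.span ℂ {y : X | ∃ (a : A) (x : X), π a x = y},
        Tendsto (fun i => π (e i) y) lf (𝓝 y) := by
      intro y hy
      induction hy using Submodule.span_induction with
      | mem y hy =>
        obtain ⟨a, x, rfl⟩ := hy
        have h1 : Tendsto (fun i => e i * a) lf (𝓝 a) := (he a).1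
        have h2 : Continuous fun c : A => π c x := π.continuous.clm_apply continuous_const
        have h3 := (h2.tendsto a).comp h1
        have h4 : ∀ i, ((fun c : A => π c x) ∘ fun i => e i * a) i = π (e i) (π a x) :=
          fun i => by simp only [Function.comp_apply, hπmul]; rfl
        exact Filter.Tendsto.congr h4 h3
      | zero => simpa using (tendsto_const_nhds : Tendsto (fun _ : ι => (0 : X)) lf _)
      | add u v _ _ hu hv => simpa using hu.add hv
      | smul c u _ hu => simpa using hu.const_smul c
    intro y
    rw [Metric.tendsto_nhds]
    intro ε hε
    have hR : (0:ℝ) ≤ ‖π‖ * K := mul_nonneg (norm_nonneg π) hK0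
    have hδ : (0:ℝ) < ε / (3 * (‖π‖ * K + 1)) := by positivity
    obtain ⟨z, hz, hdz⟩ := Metric.mem_closure_iff.1 (hπnd y) _ hδ
    have hz' := Metric.tendsto_nhds.1 (hspan z hz) (ε/3) (by positivity)
    filter_upwards [hz'] with i hi
    have hb1 : ‖π (e i) (y - z)‖ ≤ ‖π‖ * K * ‖y - z‖ := by
      calc ‖π (e i) (y - z)‖ ≤ ‖π (e i)‖ * ‖y - z‖ := (π (e i)).le_opNorm _
        _ ≤ (‖π‖ * K) * ‖y - z‖ := by
            apply mul_le_mul_of_nonneg_right _ (norm_nonneg _)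
            calc ‖π (e i)‖ ≤ ‖π‖ * ‖e i‖ := π.le_opNorm _
              _ ≤ ‖π‖ * K := mul_le_mul_of_nonneg_left (heK i) (norm_nonneg π)
    have hdist : ‖π (e i) y - y‖ ≤ ‖π (e i) (y - z)‖ + ‖π (e i) z - z‖ + ‖z - y‖ := by
      have heqd : π (e i) y - y = π (e i) (y - z) + (π (e i) z - z) + (z - y) := by
        rw [map_sub]; abel
      rw [heqd]
      exact norm_add₃_le
    have hi' : ‖π (e i) z - z‖ < ε/3 := by rwa [dist_eq_norm] at hi
    have hyz : ‖y - z‖ < ε / (3 * (‖π‖ * K + 1)) := by rwa [dist_eq_norm] at hdz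
    have hzy : ‖z - y‖ < ε / (3 * (‖π‖ * K + 1)) := by rwa [norm_sub_rev]
    have hsmall : ‖π‖ * K * ‖y - z‖ ≤ (‖π‖ * K + 1) * (ε / (3 * (‖π‖ * K + 1))) := by
      apply mul_le_mul (by linarith) hyz.le (norm_nonneg _) (by linarith)
    have heq3 : (‖π‖ * K + 1) * (ε / (3 * (‖π‖ * K + 1))) = ε / 3 := by
      field_simp
    have h3' : ε / (3 * (‖π‖ * K + 1)) ≤ ε / 3 := by
      rw [div_le_div_iff₀ (by positivity) (by norm_num)]
      nlinarith
    rw [dist_eq_norm]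
    calc ‖π (e i) y - y‖ ≤ ‖π (e i) (y - z)‖ + ‖π (e i) z - z‖ + ‖z - y‖ := hdist
      _ < ε/3 + ε/3 + ε/3 := by
          have hq1 := hb1.trans (hsmall.trans_eq heq3)
          have hq2 := hzy.trans_le h3'
          linarith [hi']
      _ = ε := by ring
  intro T
  set comm : Set (X →L[ℂ] X) := {S : X →L[ℂ] X | ∀ a : A, S.comp (π a) = (π a).comp S}
    with hcomm
  have hidc : ContinuousLinearMap.id ℂ X ∈ comm := by
    rw [hcomm]; intro a; simp
  have hmemimg : ∀ x : X, x ∈ (fun S : X →L[ℂ] X => S x) '' comm :=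
    fun x => ⟨ContinuousLinearMap.id ℂ X, hidc, rfl⟩
  have imgne : ∀ x : X, ((fun S : X →L[ℂ] X => S x) '' comm).Nonempty :=
    fun x => ⟨x, hmemimg x⟩
  set Dset : Set ℝ := {d : ℝ | ∃ x : X, ‖x‖ ≤ 1 ∧
    d = Metric.infDist (T x) ((fun S : X →L[ℂ] X => S x) '' comm)} with hDset
  set β := sSup Dset with hβ
  have hbdd : BddAbove Dset := by
    refine ⟨‖T‖ + 1, ?_⟩
    rintro d ⟨x, hx, rfl⟩
    calc Metric.infDist (T x) ((fun S : X →L[ℂ] X => S x) '' comm)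
        ≤ dist (T x) x := Metric.infDist_le_dist_of_mem (hmemimg x)
      _ ≤ ‖T‖ + 1 := by
          rw [dist_eq_norm]
          have h1 : ‖T x - x‖ ≤ ‖T x‖ + ‖x‖ := norm_sub_le _ _
          have h2 : ‖T x‖ ≤ ‖T‖ * ‖x‖ := T.le_opNorm x
          nlinarith [norm_nonneg (T : X →L[ℂ] X), norm_nonneg x]
  have hβ0 : (0:ℝ) ≤ β := by
    refine le_csSup hbdd ⟨0, by simp, ?_⟩
    rw [map_zero]
    exact (Metric.infDist_zero_of_mem (hmemimg 0)).symm
  have hβle : ∀ x : X, ‖x‖ ≤ 1 →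
      Metric.infDist (T x) ((fun S : X →L[ℂ] X => S x) '' comm) ≤ β :=
    fun x hx => le_csSup hbdd ⟨x, hx, rfl⟩
  -- approximation by elements of the commutant
  have key2 : ∀ (y : X) (ε : ℝ), 0 < ε → ∃ S ∈ comm, ‖T y - S y‖ ≤ β * ‖y‖ + ε := by
    intro y ε hε
    by_cases hy : y = 0
    · refine ⟨ContinuousLinearMap.id ℂ X, hidc, ?_⟩
      simp [hy]
      positivity
    · have hy0 : (0:ℝ) < ‖y‖ := norm_pos_iff.2 hy
      set x := ((‖y‖ : ℂ))⁻¹ • y with hx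
      have hxn : ‖x‖ = 1 := by
        rw [hx, norm_smul, norm_inv]
        simp only [Complex.norm_real, Real.norm_eq_abs, abs_of_nonneg hy0.le]
        field_simp
      have h1 : Metric.infDist (T x) ((fun S : X →L[ℂ] X => S x) '' comm) < β + ε/‖y‖ :=
        lt_of_le_of_lt (hβle x hxn.le) (lt_add_of_pos_right _ (div_pos hε hy0))
      rw [Metric.infDist_lt_iff (imgne x)] at h1
      obtain ⟨p, ⟨S, hS, rfl⟩, hp⟩ := h1
      refine ⟨S, hS, ?_⟩
      have hyx : ((‖y‖ : ℂ)) • x = y := by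
        rw [hx, smul_inv_smul₀ (by exact_mod_cast hy0.ne')]
      have hdiff : T y - S y = ((‖y‖ : ℂ)) • (T x - S x) := by
        rw [smul_sub, ← map_smul, ← map_smul, hyx]
      rw [hdiff, norm_smul]
      have hnc : ‖((‖y‖ : ℂ))‖ = ‖y‖ := by
        simp [Complex.norm_real, abs_of_nonneg hy0.le]
      rw [hnc]
      rw [dist_eq_norm] at hp
      calc ‖y‖ * ‖T x - S x‖ ≤ ‖y‖ * (β + ε/‖y‖) :=
            mul_le_mul_of_nonneg_left hp.le hy0.le
        _ = β * ‖y‖ + ε := by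
            have hyε : ‖y‖ * (ε / ‖y‖) = ε := by field_simp
            rw [mul_add, hyε, mul_comm ‖y‖ β]
  set α : ℝ := ‖π‖^2 * β with hα
  have hα0 : (0:ℝ) ≤ α := mul_nonneg (by positivity) hβ0
  -- the bilinear map φ(a,b) = π(a) T π(b)
  set compX := ContinuousLinearMap.compL ℂ X X X with hcompX
  set φ : A →L[ℂ] A →L[ℂ] (X →L[ℂ] X) :=
    ((ContinuousLinearMap.compL ℂ A (X →L[ℂ] X) (X →L[ℂ] X)).flip
      ((compX T).comp π)).comp (compX.comp π) with hφdef
  have hφ : ∀ a b : A, φ a b = (π a).comp (T.comp (π b)) := by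
    intro a b
    simp only [hφdef, hcompX, ContinuousLinearMap.comp_apply,
      ContinuousLinearMap.flip_apply, ContinuousLinearMap.compL_apply]
  have hzero : ∀ a b : A, a * b = 0 → ‖φ a b‖ ≤ α * ‖a‖ * ‖b‖ := by
    intro a b hab
    refine ContinuousLinearMap.opNorm_le_bound _
      (mul_nonneg (mul_nonneg hα0 (norm_nonneg _)) (norm_nonneg _)) fun x => ?_
    refine le_of_forall_pos_le_add fun ε hε => ?_
    obtain ⟨S, hS, hSy⟩ := key2 (π b x) (ε/(‖π a‖+1)) (by positivity)
    have hcancel : π a (S (π b x)) = 0 := by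
      have hcS := hS a
      have h1 : π a (S (π b x)) = S (π a (π b x)) := by
        calc π a (S (π b x)) = ((π a).comp S) (π b x) := rfl
          _ = (S.comp (π a)) (π b x) := by rw [hcS]
          _ = S (π a (π b x)) := rfl
      rw [h1]
      have h2 : π a (π b x) = π (a * b) x := by rw [hπmul]; rfl
      rw [h2, hab]
      simp
    have heq : (φ a b) x = π a (T (π b x) - S (π b x)) := by
      rw [hφ, map_sub, hcancel, sub_zero]
      simp [ContinuousLinearMap.comp_apply]
    have hy2 : ‖π b x‖ ≤ ‖π‖ * ‖b‖ * ‖x‖ := π.le_opNorm₂ b x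
    calc ‖(φ a b) x‖ = ‖π a (T (π b x) - S (π b x))‖ := by rw [heq]
      _ ≤ ‖π a‖ * ‖T (π b x) - S (π b x)‖ := (π a).le_opNorm _
      _ ≤ ‖π a‖ * (β * ‖π b x‖ + ε/(‖π a‖+1)) :=
          mul_le_mul_of_nonneg_left hSy (norm_nonneg _)
      _ = ‖π a‖ * (β * ‖π b x‖) + ‖π a‖ * (ε/(‖π a‖+1)) := mul_add _ _ _
      _ ≤ (‖π‖ * ‖a‖) * (β * (‖π‖ * ‖b‖ * ‖x‖)) + ε := by
          have p1 : ‖π a‖ * (β * ‖π b x‖) ≤ (‖π‖ * ‖a‖) * (β * (‖π‖ * ‖b‖ * ‖x‖)) := by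
            apply mul_le_mul (π.le_opNorm a)
              (mul_le_mul_of_nonneg_left hy2 hβ0)
              (mul_nonneg hβ0 (norm_nonneg _))
              (mul_nonneg (norm_nonneg _) (norm_nonneg _))
          have p2 : ‖π a‖ * (ε/(‖π a‖+1)) ≤ ε := by
            calc ‖π a‖ * (ε/(‖π a‖+1)) ≤ (‖π a‖+1) * (ε/(‖π a‖+1)) := by
                  apply mul_le_mul_of_nonneg_right (by linarith) (by positivity)
              _ = ε := by field_simp
          linarith
      _ = α * ‖a‖ * ‖b‖ * ‖x‖ + ε := by rw [hα]; ring
  have hmain := hB (X →L[ℂ] X) φ α hα0 hzero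
  -- bound on the derivation Δ T
  have hCαK : (0:ℝ) ≤ C * α * K^2 :=
    mul_nonneg (mul_nonneg hC.le hα0) (sq_nonneg K)
  have hD : ∀ b : A, ‖Δ T b‖ ≤ C * α * K^2 * ‖b‖ := by
    intro b
    rw [hΔ]
    refine ContinuousLinearMap.opNorm_le_bound _
      (mul_nonneg hCαK (norm_nonneg _)) fun x => ?_
    refine le_of_forall_pos_le_add fun ε hε => ?_
    set Dop := (π b).comp T - T.comp (π b) with hDop
    have t1 : Tendsto (fun j => Dop (π (e j) x)) lf (𝓝 (Dop x)) :=
      (Dop.continuous.tendsto x).comp (hπe x)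
    have t1' : ∀ᶠ j in lf, ‖Dop (π (e j) x) - Dop x‖ < ε/2 := by
      have h := Metric.tendsto_nhds.1 t1 (ε/2) (by positivity)
      filter_upwards [h] with j hj
      rwa [dist_eq_norm] at hj
    obtain ⟨j, hj⟩ := t1'.exists
    have t2' : ∀ᶠ i in lf, ‖π (e i) (Dop (π (e j) x)) - Dop (π (e j) x)‖ < ε/2 := by
      have h := Metric.tendsto_nhds.1 (hπe (Dop (π (e j) x))) (ε/2) (by positivity)
      filter_upwards [h] with i hi
      rwa [dist_eq_norm] at hi
    obtain ⟨i, hi⟩ := t2'.exists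
    have h1 : φ (e i * b) (e j) - φ (e i) (b * e j)
        = (π (e i)).comp (Dop.comp (π (e j))) := by
      rw [hφ, hφ, hπmul, hπmul, hDop]
      ext z
      simp [ContinuousLinearMap.comp_apply, ContinuousLinearMap.sub_apply, map_sub]
    have h2 := hmain (e i) b (e j)
    have hbound : ‖π (e i) (Dop (π (e j) x))‖ ≤ C * α * K^2 * ‖b‖ * ‖x‖ := by
      calc ‖π (e i) (Dop (π (e j) x))‖
          = ‖((π (e i)).comp (Dop.comp (π (e j)))) x‖ := by
            simp [ContinuousLinearMap.comp_apply]
        _ ≤ ‖(π (e i)).comp (Dop.comp (π (e j)))‖ * ‖x‖ :=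
            ContinuousLinearMap.le_opNorm _ _
        _ = ‖φ (e i * b) (e j) - φ (e i) (b * e j)‖ * ‖x‖ := by rw [h1]
        _ ≤ (C * α * ‖e i‖ * ‖b‖ * ‖e j‖) * ‖x‖ :=
            mul_le_mul_of_nonneg_right h2 (norm_nonneg x)
        _ ≤ C * α * K^2 * ‖b‖ * ‖x‖ := by
            have hCa : (0:ℝ) ≤ C * α := mul_nonneg hC.le hα0
            have hei : ‖e i‖ ≤ K := heK i
            have hej : ‖e j‖ ≤ K := heK j
            have hn1 : (0:ℝ) ≤ ‖e i‖ := norm_nonneg _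
            have hn2 : (0:ℝ) ≤ ‖e j‖ := norm_nonneg _
            have hn3 : (0:ℝ) ≤ ‖b‖ := norm_nonneg _
            have hn4 : (0:ℝ) ≤ ‖x‖ := norm_nonneg _
            have hprod : ‖e i‖ * ‖e j‖ ≤ K^2 := by
              have := mul_le_mul hei hej hn2 hK0
              nlinarith
            have hfac : C * α * ‖e i‖ * ‖b‖ * ‖e j‖ * ‖x‖
                = (C * α * ‖b‖ * ‖x‖) * (‖e i‖ * ‖e j‖) := by ring
            have hfac2 : C * α * K^2 * ‖b‖ * ‖x‖ = (C * α * ‖b‖ * ‖x‖) * K^2 := by ring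
            rw [hfac, hfac2]
            exact mul_le_mul_of_nonneg_left hprod
              (mul_nonneg (mul_nonneg hCa hn3) hn4)
    have hsplit : Dop x = (Dop x - Dop (π (e j) x))
        + (Dop (π (e j) x) - π (e i) (Dop (π (e j) x)))
        + π (e i) (Dop (π (e j) x)) := by abel
    calc ‖Dop x‖ ≤ ‖Dop x - Dop (π (e j) x)‖
          + ‖Dop (π (e j) x) - π (e i) (Dop (π (e j) x))‖
          + ‖π (e i) (Dop (π (e j) x))‖ := by
          conv_lhs => rw [hsplit]
          exact norm_add₃_le
      _ ≤ ε/2 + ε/2 + C * α * K^2 * ‖b‖ * ‖x‖ := by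
          have hj' : ‖Dop x - Dop (π (e j) x)‖ < ε/2 := by rwa [norm_sub_rev] at hj
          have hi' : ‖Dop (π (e j) x) - π (e i) (Dop (π (e j) x))‖ < ε/2 := by
            rwa [norm_sub_rev] at hi
          linarith [hbound]
      _ = C * α * K^2 * ‖b‖ * ‖x‖ + ε := by ring
  have hΔnorm : ‖Δ T‖ ≤ C * α * K^2 :=
    ContinuousLinearMap.opNorm_le_bound _ hCαK hD
  calc Metric.infDist T comm ≤ M * ‖Δ T‖ := hMdist T
    _ ≤ M * (C * α * K^2) := mul_le_mul_of_nonneg_left hΔnorm hM.le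
    _ = M * C * K ^ 2 * ‖π‖ ^ 2 * β := by rw [hα]; ring
end
end

section
/- Let 0 < c < 1, let V = [−c, c] ⊆ 𝕋 = ℝ/2πℤ with λ(V) = c/π for the normalized Haar measure λ, let f(s) = e^{is} − 1, and let v = f·((1/λ(V))·(1_{V+V} ∗ 1_V)). Then ‖v‖_{L²(𝕋)} ≤ 3c·√(2c/π), where the L²-norm is taken with respect to the normalized Haar measure. -/
open MeasureTheory AddCircle

noncomputable section

local instance : Fact (0 < 2 * Real.pi) := ⟨by positivity⟩

/-- The circle `𝕋 = ℝ/2πℤ`. -/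
abbrev Circle2Pi : Type := AddCircle (2 * Real.pi)

/-- Membership in the Fourier algebra `A(𝕋)`: continuity together with absolute
summability of the Fourier coefficients. -/
def MemFourierAlg (f : Circle2Pi → ℂ) : Prop :=
  Continuous f ∧ Summable fun n : ℤ => ‖fourierCoeff f n‖

/-- The norm of the Fourier algebra `A(𝕋)`: `‖f‖ = ∑ₙ |f̂(n)|`. -/
def fourierAlgNorm (f : Circle2Pi → ℂ) : ℝ :=
  ∑' n : ℤ, ‖fourierCoeff f n‖

/-- Normalized convolution on `𝕋` (with respect to the probability Haar measure). -/
def circleConv (f g : Circle2Pi → ℂ) : Circle2Pi → ℂ :=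
  fun x => ∫ y : Circle2Pi, f y * g (x - y) ∂haarAddCircle


open scoped Pointwise

lemma aux_norm_exp_sub_one (t : ℝ) : ‖Complex.exp (t * Complex.I) - 1‖ ≤ |t| := by
  have h1 : ‖Complex.exp (t * Complex.I) - 1‖ ^ 2 = 2 - 2 * Real.cos t := by
    rw [Complex.sq_norm]
    simp [Complex.normSq_apply, Complex.exp_ofReal_mul_I_re, Complex.exp_ofReal_mul_I_im]
    nlinarith [Real.sin_sq_add_cos_sq t]
  have h2 : 2 - 2 * Real.cos t ≤ t ^ 2 := by
    have ha := Real.cos_two_mul (t / 2)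
    have hb := Real.sin_sq_add_cos_sq (t / 2)
    have hc := Real.sin_sq_le_sq (x := t / 2)
    have h : (2 : ℝ) * (t / 2) = t := by ring
    rw [h] at ha
    nlinarith
  have h3 : ‖Complex.exp (t * Complex.I) - 1‖ ^ 2 ≤ |t| ^ 2 := by rw [h1, sq_abs]; linarith
  nlinarith [norm_nonneg (Complex.exp (t * Complex.I) - 1), abs_nonneg t]

lemma aux_norm_coe_le (t : ℝ) : ‖((t : Circle2Pi))‖ ≤ |t| := by
  simpa using QuotientAddGroup.norm_mk_le_norm (S := AddSubgroup.zmultiples (2 * Real.pi)) (m := t)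

lemma aux_meas_le {S : Set Circle2Pi} {r : ℝ} (hr : 0 ≤ r)
    (h : S ⊆ Metric.closedBall (0 : Circle2Pi) r) :
    ((haarAddCircle : Measure Circle2Pi) S).toReal ≤ r / Real.pi := by
  have h1 : (volume : Measure Circle2Pi) S ≤ ENNReal.ofReal (2 * r) :=
    (measure_mono h).trans
      (by rw [AddCircle.volume_closedBall]
          exact ENNReal.ofReal_le_ofReal (min_le_right _ _))
  have hv : ((volume : Measure Circle2Pi) S).toReal
      = 2 * Real.pi * ((haarAddCircle : Measure Circle2Pi) S).toReal := by
    rw [AddCircle.volume_eq_smul_haarAddCircle]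
    rw [Measure.smul_apply, smul_eq_mul, ENNReal.toReal_mul,
      ENNReal.toReal_ofReal (by positivity)]
  have hv2 : ((volume : Measure Circle2Pi) S).toReal ≤ 2 * r :=
    ENNReal.toReal_le_of_le_ofReal (by positivity) h1
  rw [hv] at hv2
  rw [le_div_iff₀ Real.pi_pos]
  nlinarith [Real.pi_pos]

theorem stmt_16 (c : ℝ) (hc0 : 0 < c) (hc1 : c < 1)
    (V : Set Circle2Pi) (hV : V = (fun x : ℝ => (x : Circle2Pi)) '' Set.Icc (-c) c)
    (f : Circle2Pi → ℂ) (hf : ∀ s : Circle2Pi, f s = fourier 1 s - 1)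
    (v : Circle2Pi → ℂ)
    (hv : v = fun x => f x * (((Real.pi / c : ℝ) : ℂ) *
      circleConv ((V + V).indicator fun _ => (1 : ℂ)) (V.indicator fun _ => (1 : ℂ)) x)) :
    Real.sqrt (∫ x : Circle2Pi, ‖v x‖ ^ 2 ∂haarAddCircle) ≤
      3 * c * Real.sqrt (2 * c / Real.pi) := by
  have hπ := Real.pi_pos
  -- compactness / measurability
  have hVc : IsCompact V := hV ▸ isCompact_Icc.image (AddCircle.continuous_mk' _)
  have hWc : IsCompact (V + V) := hVc.add hVc
  have hVm : MeasurableSet V := hVc.measurableSet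
  have hWm : MeasurableSet (V + V) := hWc.measurableSet
  -- measure bounds
  have hVsub : V ⊆ Metric.closedBall (0 : Circle2Pi) c := by
    rw [hV]; rintro x ⟨t, ht, rfl⟩
    rw [Metric.mem_closedBall, dist_zero_right]
    exact (aux_norm_coe_le t).trans (abs_le.2 ⟨ht.1, ht.2⟩)
  have hWsub : V + V ⊆ Metric.closedBall (0 : Circle2Pi) (2 * c) := by
    rw [hV]; rintro x ⟨a, ⟨s, hs, rfl⟩, b, ⟨t, ht, rfl⟩, rfl⟩
    show dist (((s + t : ℝ)) : Circle2Pi) 0 ≤ 2 * c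
    rw [dist_zero_right]
    refine (aux_norm_coe_le _).trans (abs_le.2 ⟨?_, ?_⟩) <;>
      [linarith [hs.1, ht.1]; linarith [hs.2, ht.2]]
  have hμV : ((haarAddCircle : Measure Circle2Pi) V).toReal ≤ c / Real.pi :=
    aux_meas_le hc0.le hVsub
  have hμW : ((haarAddCircle : Measure Circle2Pi) (V + V)).toReal ≤ 2 * c / Real.pi :=
    aux_meas_le (by positivity) hWsub
  -- real-valued indicators
  set I₁ : Circle2Pi → ℝ := (V + V).indicator (fun _ => 1) with hI₁
  set I₂ : Circle2Pi → ℝ := V.indicator (fun _ => 1) with hI₂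
  set g : Circle2Pi → ℝ := fun x => ∫ y, I₁ y * I₂ (x - y) ∂haarAddCircle with hg
  have hI1int : Integrable I₁ haarAddCircle := (integrable_const (1 : ℝ)).indicator hWm
  have hI2int : Integrable I₂ haarAddCircle := (integrable_const (1 : ℝ)).indicator hVm
  have hI1meas : Measurable I₁ := measurable_const.indicator hWm
  have hI2meas : Measurable I₂ := measurable_const.indicator hVm
  have hple : ∀ a b : ℝ, 0 ≤ a → a ≤ 1 → 0 ≤ b → a * b ≤ b := by
    intro a b h1 h2 h3; nlinarith
  have hI1le : ∀ y, 0 ≤ I₁ y ∧ I₁ y ≤ 1 := by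
    intro y; by_cases h : y ∈ V + V <;> simp [hI₁, Set.indicator_apply, h]
  have hI2le : ∀ y, 0 ≤ I₂ y ∧ I₂ y ≤ 1 := by
    intro y; by_cases h : y ∈ V <;> simp [hI₂, Set.indicator_apply, h]
  -- g equals the mathlib convolution
  have hgconv : g = MeasureTheory.convolution I₁ I₂ (ContinuousLinearMap.mul ℝ ℝ)
      haarAddCircle := by
    ext x; simp [hg, MeasureTheory.convolution_def]
  have hgint : Integrable g haarAddCircle := by
    rw [hgconv]; exact hI1int.integrable_convolution _ hI2int
  have hginteg : ∫ x, g x ∂haarAddCircle =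
      ((haarAddCircle : Measure Circle2Pi) (V + V)).toReal *
      ((haarAddCircle : Measure Circle2Pi) V).toReal := by
    rw [hgconv, integral_convolution _ hI1int hI2int]
    have e1 : ∫ y, I₁ y ∂haarAddCircle
        = ((haarAddCircle : Measure Circle2Pi) (V + V)).toReal := by
      exact (integral_indicator_one (μ := (haarAddCircle : Measure Circle2Pi)) hWm).trans (measureReal_def _ _)
    have e2 : ∫ y, I₂ y ∂haarAddCircle
        = ((haarAddCircle : Measure Circle2Pi) V).toReal := by
      exact (integral_indicator_one (μ := (haarAddCircle : Measure Circle2Pi)) hVm).trans (measureReal_def _ _)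
    rw [e1, e2]; rfl
  -- pointwise facts about g
  have hg0 : ∀ x, 0 ≤ g x := fun x =>
    integral_nonneg fun y => mul_nonneg (hI1le y).1 (hI2le _).1
  have hgle : ∀ x, g x ≤ ((haarAddCircle : Measure Circle2Pi) V).toReal := by
    intro x
    have hcomp : Integrable (fun y => I₂ (x - y)) haarAddCircle := hI2int.comp_sub_left x
    have hprod : Integrable (fun y => I₁ y * I₂ (x - y)) haarAddCircle := by
      refine hcomp.mono ?_ ?_
      · exact (hI1meas.mul (hI2meas.comp (measurable_const.sub measurable_id))).aestronglyMeasurable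
      · refine Filter.Eventually.of_forall fun y => ?_
        simp only [Real.norm_eq_abs, abs_mul, abs_of_nonneg (hI1le y).1,
          abs_of_nonneg (hI2le (x - y)).1]
        exact hple _ _ (hI1le y).1 (hI1le y).2 (hI2le _).1
    calc g x ≤ ∫ y, I₂ (x - y) ∂haarAddCircle := by
          refine integral_mono hprod hcomp fun y => ?_
          exact hple _ _ (hI1le y).1 (hI1le y).2 (hI2le _).1
      _ = ∫ y, I₂ y ∂haarAddCircle := integral_sub_left_eq_self I₂ _ x
      _ = _ := by
          exact (integral_indicator_one (μ := (haarAddCircle : Measure Circle2Pi)) hVm).trans (measureReal_def _ _)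
  -- the complex convolution in terms of g
  have hconv : ∀ x, circleConv ((V + V).indicator fun _ => (1 : ℂ))
      (V.indicator fun _ => (1 : ℂ)) x = ((g x : ℝ) : ℂ) := by
    intro x
    have : (fun y => ((V + V).indicator fun _ => (1 : ℂ)) y *
        (V.indicator fun _ => (1 : ℂ)) (x - y)) =
        fun y => ((I₁ y * I₂ (x - y) : ℝ) : ℂ) := by
      funext y
      by_cases h1 : y ∈ V + V <;> by_cases h2 : x - y ∈ V <;>
        simp [hI₁, hI₂, Set.indicator_apply, h1, h2]
    show (∫ y, ((V + V).indicator fun _ => (1 : ℂ)) y *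
        (V.indicator fun _ => (1 : ℂ)) (x - y) ∂haarAddCircle) = _
    rw [this]
    exact integral_ofReal
  -- support bound for f
  have hsupp : ∀ x, g x ≠ 0 → ‖f x‖ ≤ 3 * c := by
    intro x hx
    have hex : ∃ y, I₁ y * I₂ (x - y) ≠ 0 := by
      by_contra h
      push_neg at h
      exact hx (by simp only [hg]; simp [h])
    obtain ⟨y, hy⟩ := hex
    have h1 : y ∈ V + V := by
      by_contra h; exact hy (by simp [hI₁, Set.indicator_of_notMem h])
    have h2 : x - y ∈ V := by
      by_contra h; exact hy (by simp [hI₂, Set.indicator_of_notMem h])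
    rw [hV] at h1 h2
    obtain ⟨a, ⟨s, hs, rfl⟩, b, ⟨t, ht, rfl⟩, hab⟩ := h1
    obtain ⟨u, hu, hu2⟩ := h2
    change ((s : Circle2Pi)) + (t : Circle2Pi) = y at hab
    change ((u : Circle2Pi)) = x - y at hu2
    have hxe : x = ((u + (s + t) : ℝ) : Circle2Pi) := by
      have h' : ((u + (s + t) : ℝ) : Circle2Pi) = (u : Circle2Pi) + ((s : Circle2Pi) + t) := rfl
      rw [h', hu2, hab]
      abel
    have hfour : (fourier 1 (((u + (s + t) : ℝ)) : Circle2Pi) : ℂ)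
        = Complex.exp (((u + (s + t) : ℝ) : ℂ) * Complex.I) := by
      rw [fourier_coe_apply]
      congr 1
      have hπ' : ((Real.pi : ℂ)) ≠ 0 := by exact_mod_cast Real.pi_ne_zero
      push_cast
      field_simp
    rw [hf, hxe, hfour]
    refine (aux_norm_exp_sub_one _).trans ?_
    rw [abs_le]
    constructor <;> [linarith [hu.1, hs.1, ht.1]; linarith [hu.2, hs.2, ht.2]]
  -- pointwise bound for ‖v x‖²
  have hpt : ∀ x, ‖v x‖ ^ 2 ≤ 9 * c * Real.pi * g x := by
    intro x
    rw [hv]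
    simp only []
    rw [hconv x]
    by_cases hgx : g x = 0
    · simp [hgx]
    · have hA := hsupp x hgx
      have hA0 : (0 : ℝ) ≤ ‖f x‖ := norm_nonneg _
      have hG0 := hg0 x
      have hGle : g x ≤ c / Real.pi := (hgle x).trans hμV
      have hnorm : ‖f x * (((Real.pi / c : ℝ) : ℂ) * ((g x : ℝ) : ℂ))‖
          = ‖f x‖ * (Real.pi / c * g x) := by
        rw [norm_mul, norm_mul, Complex.norm_real, Complex.norm_real,
          Real.norm_eq_abs, Real.norm_eq_abs, abs_of_nonneg (by positivity),
          abs_of_nonneg hG0]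
      rw [hnorm]
      have hK1 : Real.pi / c * g x ≤ 1 := by
        rw [div_mul_eq_mul_div, div_le_one hc0]
        calc Real.pi * g x ≤ Real.pi * (c / Real.pi) :=
              mul_le_mul_of_nonneg_left hGle hπ.le
          _ = c := by field_simp
      have hK0 : 0 ≤ Real.pi / c * g x := by positivity
      have hA2 : ‖f x‖ ^ 2 ≤ 9 * c ^ 2 := by nlinarith
      have key : (‖f x‖ * (Real.pi / c * g x)) ^ 2
          ≤ 9 * c ^ 2 * (Real.pi / c * g x) := by
        nlinarith [sq_nonneg (Real.pi / c * g x), mul_le_mul_of_nonneg_right hA2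
          (sq_nonneg (Real.pi / c * g x)),
          mul_le_mul_of_nonneg_left (mul_le_of_le_one_right hK0 hK1)
            (by positivity : (0:ℝ) ≤ 9 * c ^ 2)]
      refine key.trans (le_of_eq ?_)
      field_simp
  -- integrate
  have hint : ∫ x : Circle2Pi, ‖v x‖ ^ 2 ∂haarAddCircle ≤ 18 * c ^ 3 / Real.pi := by
    have h1 : ∫ x : Circle2Pi, ‖v x‖ ^ 2 ∂haarAddCircle
        ≤ ∫ x, 9 * c * Real.pi * g x ∂haarAddCircle := by
      refine integral_mono_of_nonneg (Filter.Eventually.of_forall fun x => by positivity)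
        (hgint.const_mul _) (Filter.Eventually.of_forall hpt)
    have h2 : ∫ x, 9 * c * Real.pi * g x ∂haarAddCircle
        = 9 * c * Real.pi * (((haarAddCircle : Measure Circle2Pi) (V + V)).toReal *
          ((haarAddCircle : Measure Circle2Pi) V).toReal) := by
      rw [integral_const_mul, hginteg]
    have h3 : 9 * c * Real.pi * (((haarAddCircle : Measure Circle2Pi) (V + V)).toReal *
          ((haarAddCircle : Measure Circle2Pi) V).toReal) ≤ 18 * c ^ 3 / Real.pi := by
      have hμV0 : 0 ≤ ((haarAddCircle : Measure Circle2Pi) V).toReal := ENNReal.toReal_nonneg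
      have hμW0 : 0 ≤ ((haarAddCircle : Measure Circle2Pi) (V + V)).toReal :=
        ENNReal.toReal_nonneg
      calc 9 * c * Real.pi * (((haarAddCircle : Measure Circle2Pi) (V + V)).toReal *
            ((haarAddCircle : Measure Circle2Pi) V).toReal)
          ≤ 9 * c * Real.pi * ((2 * c / Real.pi) * (c / Real.pi)) := by
            have : ((haarAddCircle : Measure Circle2Pi) (V + V)).toReal *
                ((haarAddCircle : Measure Circle2Pi) V).toReal
                ≤ (2 * c / Real.pi) * (c / Real.pi) := by
              apply mul_le_mul hμW hμV hμV0 (by positivity)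
            exact mul_le_mul_of_nonneg_left this (by positivity)
        _ = 18 * c ^ 3 / Real.pi := by field_simp; ring
    linarith [h1, h2.le, h2.ge, h3]
  -- conclude with sqrt
  have hsq : 18 * c ^ 3 / Real.pi = (3 * c * Real.sqrt (2 * c / Real.pi)) ^ 2 := by
    rw [mul_pow, Real.sq_sqrt (by positivity)]
    ring
  calc Real.sqrt (∫ x : Circle2Pi, ‖v x‖ ^ 2 ∂haarAddCircle)
      ≤ Real.sqrt ((3 * c * Real.sqrt (2 * c / Real.pi)) ^ 2) :=
        Real.sqrt_le_sqrt (hint.trans_eq hsq)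
    _ = 3 * c * Real.sqrt (2 * c / Real.pi) := Real.sqrt_sq (by positivity)
end
end
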